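/- Let τ = {nop,inp} and let φ = {ζ0,...,ζ_{m-1}} be an instance of cubic monotone 1-in-3 3SAT with variables X = {X0,...,X_{m-1}} and clauses ζi = {X_{i0},X_{i1},X_{i2}}, and let A_φ be the transition system associated to φ as defined in the context. If φ has a one-in-three model, then A_φ has the τ-SSP. -/

import Mathlib

/-!  Common framework: Boolean types of nets, transition systems (as labeled
edge relations), τ-regions, state separation. -/

inductive Interaction : Type
  | nop | inp | out | res | set | swap | used | free
  deriving DecidableEq

/-- The partial function on `{0,1}` (encoded as `Bool`, `false = 0`, `true = 1`)
defined by a Boolean interaction. -/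
def Interaction.eval : Interaction → Bool → Option Bool
  | .nop, x => some x
  | .inp, true => some false
  | .inp, false => none
  | .out, false => some true
  | .out, true => none
  | .res, _ => some false
  | .set, _ => some true
  | .swap, x => some (!x)
  | .used, true => some true
  | .used, false => none
  | .free, false => some false
  | .free, true => none

/-- `(sup, sig)` is a `τ`-region of the transition system given by the labeled
edge relation `edge`. -/
def IsRegion {S E : Type} (edge : S → E → S → Prop) (τ : Set Interaction)
    (sup : S → Bool) (sig : E → Interaction) : Prop :=
  (∀ e, sig e ∈ τ) ∧
    ∀ s e s', edge s e s' → (sig e).eval (sup s) = some (sup s')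

/-- The `τ`-state separation property: every pair of distinct states (SSP atom)
is solved by some `τ`-region. -/
def HasSSP {S E : Type} (edge : S → E → S → Prop) (τ : Set Interaction) : Prop :=
  ∀ s s' : S, s ≠ s' → ∃ sup sig, IsRegion edge τ sup sig ∧ sup s ≠ sup s'

def Deterministic {S E : Type} (edge : S → E → S → Prop) : Prop :=
  ∀ s e s₁ s₂, edge s e s₁ → edge s e s₂ → s₁ = s₂

inductive Reachable {S E : Type} (edge : S → E → S → Prop) : S → S → Prop
  | refl (s : S) : Reachable edge s s
  | tail {s t u : S} {e : E} : Reachable edge s t → edge t e u → Reachable edge s u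

/-- `ι` is an initial state from which every state is reachable. -/
def Initialized {S E : Type} (edge : S → E → S → Prop) (ι : S) : Prop :=
  ∀ s, Reachable edge ι s

def LoopFree {S E : Type} (edge : S → E → S → Prop) : Prop :=
  ∀ s e s', edge s e s' → s ≠ s'

def BiDirected {S E : Type} (edge : S → E → S → Prop) : Prop :=
  LoopFree edge ∧ ∀ s e s', edge s e s' → edge s' e s

/-- A region is normalized (for a `nop`-equipped type): no event has signature
`used` or `free`, and every event with signature in `{inp,out,res,set,swap}`
has an edge on which the support changes. -/
def Normalized {S E : Type} (edge : S → E → S → Prop)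
    (sup : S → Bool) (sig : E → Interaction) : Prop :=
  ∀ e, (sig e ≠ Interaction.used ∧ sig e ≠ Interaction.free) ∧
    ((sig e = Interaction.inp ∨ sig e = Interaction.out ∨ sig e = Interaction.res ∨
        sig e = Interaction.set ∨ sig e = Interaction.swap) →
      ∃ s s', edge s e s' ∧ sup s ≠ sup s')

/-- save = save₁ ∪ save₀ = {nop,set,used} ∪ {nop,res,free}. -/
def saveSet : Set Interaction :=
  {Interaction.nop, Interaction.set, Interaction.used, Interaction.res, Interaction.free}

/-- An instance of cubic monotone 1-in-3 3SAT: `m` clauses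
`ζ i = {X (c0 i), X (c1 i), X (c2 i)}` over the `m` variables `Fin m`; each
clause consists of three distinct variables and every variable occurs in
exactly three clauses. -/
def CubicMonotone {m : ℕ} (c0 c1 c2 : Fin m → Fin m) : Prop :=
  (∀ i, c0 i ≠ c1 i ∧ c0 i ≠ c2 i ∧ c1 i ≠ c2 i) ∧
    ∀ x : Fin m,
      (Finset.univ.filter fun i => c0 i = x ∨ c1 i = x ∨ c2 i = x).card = 3

/-- `M` is a one-in-three model: it contains exactly one variable of every
clause. -/
def OneInThreeModel {m : ℕ} (c0 c1 c2 : Fin m → Fin m) (M : Set (Fin m)) : Prop :=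
  ∀ i : Fin m,
    (c0 i ∈ M ∧ c1 i ∉ M ∧ c2 i ∉ M) ∨
      (c0 i ∉ M ∧ c1 i ∈ M ∧ c2 i ∉ M) ∨
      (c0 i ∉ M ∧ c1 i ∉ M ∧ c2 i ∈ M)

/-- The states of the TS `A_φ`: `⊤`; `t_{i,0}` for `i ∈ {0,…,m+1}`;
`t_{i,j}` for `i < m`, `j ∈ {1,2,3}` (here `t i j` encodes `t_{i,j+1}`);
and `g_{i,j}` for `i < m`, `j ∈ {0,1,2}`. -/
inductive PhiState (m : ℕ) : Type
  | top : PhiState m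
  | t0 (i : Fin (m + 2)) : PhiState m
  | t (i : Fin m) (j : Fin 3) : PhiState m
  | g (i : Fin m) (j : Fin 3) : PhiState m

/-- The events of `A_φ`: `w_i`, `k`, `v`, `u_i`, `y_i` and the variables
`X_x`. -/
inductive PhiEvent (m : ℕ) : Type
  | w (i : Fin m) : PhiEvent m
  | k : PhiEvent m
  | v : PhiEvent m
  | u (i : Fin m) : PhiEvent m
  | y (i : Fin m) : PhiEvent m
  | X (x : Fin m) : PhiEvent m

/-- The edges of the TS `A_φ` (with initial state `t_{0,0}`):
the path `P : t_{0,0} →w₀ t_{1,0} →w₁ … →w_{m-1} t_{m,0} →k t_{m+1,0} →v ⊤`;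
for every clause `i` the path
`T_i : t_{i,0} →X_{i0} t_{i,1} →X_{i1} t_{i,2} →X_{i2} t_{i,3} →u_i ⊤`; and
for every `i` the path `G_i : t_{0,0} →y_i g_{i,0} →u_i g_{i,1} →k g_{i,2}`. -/
inductive PhiEdge {m : ℕ} (c0 c1 c2 : Fin m → Fin m) :
    PhiState m → PhiEvent m → PhiState m → Prop
  | w (i : Fin m) :
      PhiEdge c0 c1 c2 (.t0 ⟨i.val, by have := i.isLt; omega⟩) (.w i)
        (.t0 ⟨i.val + 1, by have := i.isLt; omega⟩)
  | k : PhiEdge c0 c1 c2 (.t0 ⟨m, by omega⟩) .k (.t0 ⟨m + 1, by omega⟩)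
  | v : PhiEdge c0 c1 c2 (.t0 ⟨m + 1, by omega⟩) .v .top
  | x0 (i : Fin m) :
      PhiEdge c0 c1 c2 (.t0 ⟨i.val, by have := i.isLt; omega⟩) (.X (c0 i)) (.t i 0)
  | x1 (i : Fin m) : PhiEdge c0 c1 c2 (.t i 0) (.X (c1 i)) (.t i 1)
  | x2 (i : Fin m) : PhiEdge c0 c1 c2 (.t i 1) (.X (c2 i)) (.t i 2)
  | u (i : Fin m) : PhiEdge c0 c1 c2 (.t i 2) (.u i) .top
  | y (i : Fin m) : PhiEdge c0 c1 c2 (.t0 ⟨0, by omega⟩) (.y i) (.g i 0)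
  | gu (i : Fin m) : PhiEdge c0 c1 c2 (.g i 0) (.u i) (.g i 1)
  | gk (i : Fin m) : PhiEdge c0 c1 c2 (.g i 1) .k (.g i 2)

namespace SSPAux

variable {m : ℕ}

/-- Region A: false exactly on `⊤` and `g_{i,1}, g_{i,2}`. -/
def supA : PhiState m → Bool
  | .top => false
  | .g _ j => decide (j.val = 0)
  | _ => true

def sigA : PhiEvent m → Interaction
  | .v => .inp
  | .u _ => .inp
  | _ => .nop

lemma regA (c0 c1 c2 : Fin m → Fin m) :
    IsRegion (PhiEdge c0 c1 c2) {Interaction.nop, Interaction.inp} supA sigA := by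
  constructor
  · intro e; cases e <;> simp [sigA]
  · intro s e s' h
    cases h <;> simp [supA, sigA, Interaction.eval]

/-- Region B i: false exactly on `g_{i,0}, g_{i,1}, g_{i,2}`. -/
def supB (i : Fin m) : PhiState m → Bool
  | .g i' _ => decide (i' ≠ i)
  | _ => true

def sigB (i : Fin m) : PhiEvent m → Interaction
  | .y i' => if i' = i then .inp else .nop
  | _ => .nop

lemma regB (c0 c1 c2 : Fin m → Fin m) (i : Fin m) :
    IsRegion (PhiEdge c0 c1 c2) {Interaction.nop, Interaction.inp} (supB i) (sigB i) := by
  constructor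
  · intro e; cases e <;> simp only [sigB, Set.mem_insert_iff, Set.mem_singleton_iff] <;>
      first | tauto | (split <;> tauto)
  · intro s e s' h
    cases h <;> simp [supB, sigB, Interaction.eval]
    case y j =>
      by_cases hji : j = i <;> simp [hji, Interaction.eval]

/-- Region K (model region): `k = inp`, `X x = inp` iff `f x`. -/
def supK (c0 c1 : Fin m → Fin m) (f : Fin m → Bool) : PhiState m → Bool
  | .top => false
  | .t0 a => decide (a.val ≤ m)
  | .t i j => if j.val = 0 then !f (c0 i) else if j.val = 1 then !(f (c0 i) || f (c1 i)) else false
  | .g _ j => decide (j.val ≤ 1)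

def sigK (f : Fin m → Bool) : PhiEvent m → Interaction
  | .k => .inp
  | .X x => if f x then .inp else .nop
  | _ => .nop

def ExactlyOne (c0 c1 c2 : Fin m → Fin m) (f : Fin m → Bool) : Prop :=
  ∀ i, (f (c0 i) = true ∧ f (c1 i) = false ∧ f (c2 i) = false) ∨
    (f (c0 i) = false ∧ f (c1 i) = true ∧ f (c2 i) = false) ∨
    (f (c0 i) = false ∧ f (c1 i) = false ∧ f (c2 i) = true)

lemma regK (c0 c1 c2 : Fin m → Fin m) (f : Fin m → Bool) (hf : ExactlyOne c0 c1 c2 f) :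
    IsRegion (PhiEdge c0 c1 c2) {Interaction.nop, Interaction.inp} (supK c0 c1 f) (sigK f) := by
  constructor
  · intro e; cases e <;> simp only [sigK, Set.mem_insert_iff, Set.mem_singleton_iff] <;>
      first | tauto | (split <;> tauto)
  · intro s e s' h
    cases h <;>
      first
      | (simp [supK, sigK, Interaction.eval]; done)
      | skip
    case x0 i =>
      rcases hf i with ⟨h0, h1, h2⟩ | ⟨h0, h1, h2⟩ | ⟨h0, h1, h2⟩ <;>
        simp [supK, sigK, h0, h1, h2, Interaction.eval, Nat.le_of_lt i.isLt]
    case x1 i =>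
      rcases hf i with ⟨h0, h1, h2⟩ | ⟨h0, h1, h2⟩ | ⟨h0, h1, h2⟩ <;>
        simp [supK, sigK, h0, h1, h2, Interaction.eval]
    case x2 i =>
      rcases hf i with ⟨h0, h1, h2⟩ | ⟨h0, h1, h2⟩ | ⟨h0, h1, h2⟩ <;>
        simp [supK, sigK, h0, h1, h2, Interaction.eval]

/-- Region D i: prefix cut after `w_i`. -/
def supD (i : Fin m) : PhiState m → Bool
  | .top => false
  | .t0 a => decide (a.val ≤ i.val)
  | .t j _ => decide (j ≤ i)
  | .g j l => decide (l.val = 0 ∨ i < j)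

def sigD (i : Fin m) : PhiEvent m → Interaction
  | .w j => if j = i then .inp else .nop
  | .u j => if j ≤ i then .inp else .nop
  | _ => .nop

set_option maxRecDepth 4000 in
lemma regD (c0 c1 c2 : Fin m → Fin m) (i : Fin m) :
    IsRegion (PhiEdge c0 c1 c2) {Interaction.nop, Interaction.inp} (supD i) (sigD i) := by
  constructor
  · intro e; cases e <;> simp only [sigD, Set.mem_insert_iff, Set.mem_singleton_iff] <;>
      first | tauto | (split <;> tauto)
  · intro s e s' h
    cases h
    case w j =>
      by_cases hji : j = i
      · subst hji; simp [supD, sigD, Interaction.eval]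
      · have hv : j.val ≠ i.val := fun h => hji (Fin.ext h)
        simp [supD, sigD, hji, Interaction.eval]
        omega
    case k => simp [supD, sigD, Interaction.eval]; omega
    case v =>
      show Interaction.nop.eval (decide (m+1 ≤ i.val)) = some false
      have hv : ¬ (m+1 ≤ i.val) := by omega
      simp [hv, Interaction.eval]
    case x0 j =>
      show Interaction.nop.eval (decide (j.val ≤ i.val)) = some (decide (j ≤ i))
      simp [Interaction.eval]
    case x1 j => simp [supD, sigD, Interaction.eval]
    case x2 j => simp [supD, sigD, Interaction.eval]
    case u j =>
      by_cases hji : j ≤ i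
      · simp [supD, sigD, hji, Interaction.eval]
      · simp [supD, sigD, hji, Interaction.eval]
    case y j => simp [supD, sigD, Interaction.eval]
    case gu j =>
      by_cases hji : j ≤ i
      · have : ¬ i < j := not_lt.2 hji
        simp [supD, sigD, hji, this, Interaction.eval]
      · have : i < j := not_le.1 hji
        simp [supD, sigD, hji, this, Interaction.eval]
    case gk j => simp [supD, sigD, Interaction.eval]

/-- Region V x: variable region for `x`. -/
def supV (c0 c1 c2 : Fin m → Fin m) (x : Fin m) : PhiState m → Bool
  | .top => false
  | .t0 _ => true
  | .t i l => decide (x ≠ c0 i ∧ (1 ≤ l.val → x ≠ c1 i) ∧ (2 ≤ l.val → x ≠ c2 i))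
  | .g i l => decide (l.val = 0 ∨ x = c0 i ∨ x = c1 i ∨ x = c2 i)

def sigV (c0 c1 c2 : Fin m → Fin m) (x : Fin m) : PhiEvent m → Interaction
  | .v => .inp
  | .X x' => if x' = x then .inp else .nop
  | .u i => if x = c0 i ∨ x = c1 i ∨ x = c2 i then .nop else .inp
  | _ => .nop

lemma regV (c0 c1 c2 : Fin m → Fin m)
    (hd : ∀ i, c0 i ≠ c1 i ∧ c0 i ≠ c2 i ∧ c1 i ≠ c2 i) (x : Fin m) :
    IsRegion (PhiEdge c0 c1 c2) {Interaction.nop, Interaction.inp}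
      (supV c0 c1 c2 x) (sigV c0 c1 c2 x) := by
  constructor
  · intro e; cases e <;> simp only [sigV, Set.mem_insert_iff, Set.mem_singleton_iff] <;>
      first | tauto | (split <;> tauto)
  · intro s e s' h
    cases h <;>
      first
      | (simp [supV, sigV, Interaction.eval]; done)
      | skip
    case x0 i =>
      by_cases hx : c0 i = x
      · subst hx; simp [supV, sigV, Interaction.eval]
      · have hx' : x ≠ c0 i := fun h => hx h.symm
        simp [supV, sigV, hx, hx', Interaction.eval]
    case x1 i =>
      by_cases hx : c1 i = x
      · subst hx
        have h01 : c1 i ≠ c0 i := fun h => (hd i).1 h.symm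
        simp [supV, sigV, h01, Interaction.eval]
      · have hx' : x ≠ c1 i := fun h => hx h.symm
        simp [supV, sigV, hx, hx', Interaction.eval]
    case x2 i =>
      by_cases hx : c2 i = x
      · subst hx
        have h02 : c2 i ≠ c0 i := fun h => (hd i).2.1 h.symm
        have h12 : c2 i ≠ c1 i := fun h => (hd i).2.2 h.symm
        simp [supV, sigV, h02, h12, Interaction.eval]
      · have hx' : x ≠ c2 i := fun h => hx h.symm
        simp [supV, sigV, hx, hx', Interaction.eval]
    case u i =>
      by_cases hx : x = c0 i ∨ x = c1 i ∨ x = c2 i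
      · rcases hx with hx | hx | hx <;> subst hx <;>
          simp [supV, sigV, Interaction.eval]
      · push_neg at hx
        simp [supV, sigV, hx.1, hx.2.1, hx.2.2, Interaction.eval]
    case gu i =>
      by_cases hx : x = c0 i ∨ x = c1 i ∨ x = c2 i
      · simp [supV, sigV, hx, Interaction.eval]
      · push_neg at hx
        simp [supV, sigV, hx.1, hx.2.1, hx.2.2, Interaction.eval]

end SSPAux

/-- for `τ = {nop,inp}` and an instance `φ` of cubic monotone
1-in-3 3SAT, if `φ` has a one-in-three model, then `A_φ` has the `τ`-SSP. -/
theorem model_implies_Aphi_ssp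
    {m : ℕ} (c0 c1 c2 : Fin m → Fin m) (hcubic : CubicMonotone c0 c1 c2)
    (M : Set (Fin m)) (hM : OneInThreeModel c0 c1 c2 M) :
    HasSSP (PhiEdge c0 c1 c2) {Interaction.nop, Interaction.inp} := by
  classical
  obtain ⟨hd, -⟩ := hcubic
  have hf : SSPAux.ExactlyOne c0 c1 c2 (fun x => decide (x ∈ M)) := by
    intro i
    rcases hM i with ⟨h0, h1, h2⟩ | ⟨h0, h1, h2⟩ | ⟨h0, h1, h2⟩
    · left; simp [h0, h1, h2]
    · right; left; simp [h0, h1, h2]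
    · right; right; simp [h0, h1, h2]
  intro s s' hne
  rcases s with _ | a | ⟨i, l⟩ | ⟨i, l⟩ <;> rcases s' with _ | b | ⟨j, l'⟩ | ⟨j, l'⟩
  -- top, top
  · exact absurd rfl hne
  -- top, t0 b
  · exact ⟨_, _, SSPAux.regA c0 c1 c2, by simp [SSPAux.supA]⟩
  -- top, t j l'
  · exact ⟨_, _, SSPAux.regA c0 c1 c2, by simp [SSPAux.supA]⟩
  -- top, g j l'
  · exact ⟨_, _, SSPAux.regB c0 c1 c2 j, by simp [SSPAux.supB]⟩
  -- t0 a, top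
  · exact ⟨_, _, SSPAux.regA c0 c1 c2, by simp [SSPAux.supA]⟩
  -- t0 a, t0 b
  · have hab : a ≠ b := fun h => hne (by rw [h])
    have hv : a.val ≠ b.val := fun h => hab (Fin.ext h)
    have ha2 := a.isLt
    have hb2 := b.isLt
    by_cases ha : a.val ≤ m
    · by_cases hb : b.val ≤ m
      · rcases Nat.lt_or_ge a.val b.val with hlt | hge
        · have ham : a.val < m := by omega
          refine ⟨_, _, SSPAux.regD c0 c1 c2 ⟨a.val, ham⟩, ?_⟩
          simp only [SSPAux.supD, ne_eq, decide_eq_decide]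
          omega
        · have hbm : b.val < m := by omega
          refine ⟨_, _, SSPAux.regD c0 c1 c2 ⟨b.val, hbm⟩, ?_⟩
          simp only [SSPAux.supD, ne_eq, decide_eq_decide]
          omega
      · refine ⟨_, _, SSPAux.regK c0 c1 c2 _ hf, ?_⟩
        simp only [SSPAux.supK, ne_eq, decide_eq_decide]
        omega
    · by_cases hb : b.val ≤ m
      · refine ⟨_, _, SSPAux.regK c0 c1 c2 _ hf, ?_⟩
        simp only [SSPAux.supK, ne_eq, decide_eq_decide]
        omega
      · exfalso; omega
  -- t0 a, t j l'
  · exact ⟨_, _, SSPAux.regV c0 c1 c2 hd (c0 j), by simp [SSPAux.supV]⟩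
  -- t0 a, g j l'
  · exact ⟨_, _, SSPAux.regB c0 c1 c2 j, by simp [SSPAux.supB]⟩
  -- t i l, top
  · exact ⟨_, _, SSPAux.regA c0 c1 c2, by simp [SSPAux.supA]⟩
  -- t i l, t0 b
  · exact ⟨_, _, SSPAux.regV c0 c1 c2 hd (c0 i), by simp [SSPAux.supV]⟩
  -- t i l, t j l'
  · by_cases hij : i = j
    · subst hij
      have h01 : c0 i ≠ c1 i := (hd i).1
      have h02 : c0 i ≠ c2 i := (hd i).2.1
      have h12 : c1 i ≠ c2 i := (hd i).2.2
      obtain ⟨lv, hl⟩ := l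
      obtain ⟨lv', hl'⟩ := l'
      interval_cases lv <;> interval_cases lv' <;>
        first
        | exact absurd rfl hne
        | (refine ⟨_, _, SSPAux.regV c0 c1 c2 hd (c1 i), ?_⟩
           simp [SSPAux.supV, h01.symm, h12]; done)
        | (refine ⟨_, _, SSPAux.regV c0 c1 c2 hd (c2 i), ?_⟩
           simp [SSPAux.supV, h02.symm, h12.symm]; done)
    · have hij' : i.val ≠ j.val := fun h => hij (Fin.ext h)
      rcases Nat.lt_or_ge i.val j.val with hlt | hge
      · refine ⟨_, _, SSPAux.regD c0 c1 c2 i, ?_⟩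
        simp only [SSPAux.supD, ne_eq, decide_eq_decide, Fin.le_def]
        omega
      · refine ⟨_, _, SSPAux.regD c0 c1 c2 j, ?_⟩
        simp only [SSPAux.supD, ne_eq, decide_eq_decide, Fin.le_def]
        omega
  -- t i l, g j l'
  · exact ⟨_, _, SSPAux.regB c0 c1 c2 j, by simp [SSPAux.supB]⟩
  -- g i l, top
  · exact ⟨_, _, SSPAux.regB c0 c1 c2 i, by simp [SSPAux.supB]⟩
  -- g i l, t0 b
  · exact ⟨_, _, SSPAux.regB c0 c1 c2 i, by simp [SSPAux.supB]⟩
  -- g i l, t j l'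
  · exact ⟨_, _, SSPAux.regB c0 c1 c2 i, by simp [SSPAux.supB]⟩
  -- g i l, g j l'
  · by_cases hij : i = j
    · subst hij
      obtain ⟨lv, hl⟩ := l
      obtain ⟨lv', hl'⟩ := l'
      interval_cases lv <;> interval_cases lv' <;>
        first
        | exact absurd rfl hne
        | (refine ⟨_, _, SSPAux.regA c0 c1 c2, ?_⟩; simp [SSPAux.supA]; done)
        | (refine ⟨_, _, SSPAux.regK c0 c1 c2 _ hf, ?_⟩; simp [SSPAux.supK]; done)
    · have hji : j ≠ i := fun h => hij h.symm
      exact ⟨_, _, SSPAux.regB c0 c1 c2 i, by simp [SSPAux.supB, hji]⟩
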